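/- Transport equation for the relativistic vorticity: Let O ⊂ ℝ^{1+d} be open and let (ϱ,u) be a C² solution of the relativistic Euler equations on O with ϱ > 0, p(ϱ)+ϱ > 0, u⁰ > 0 and u^α u_α = −1, with p of class C². Let f : (0,∞) → (0,∞) be C² with f'(y)/f(y) = p'(y)/(p(y)+y), set v_α = f(ϱ) u_α, and define ω_{αβ} = ∂_α v_β − ∂_β v_α. Then for all α, β, on O: v^μ ∂_μ ω_{αβ} + ∂_α v^μ ω_{μβ} + ∂_β v^μ ω_{αμ} = 0. In particular, if ω vanishes at some time slice then it vanishes along the flow. -/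

import Mathlib

open Set

noncomputable section

/-- The diagonal entries of the Minkowski metric `m = diag(−1,1,…,1)` on `ℝ^{1+d}`. -/
def mlt (d : ℕ) (α : Fin (d + 1)) : ℝ := if α = 0 then -1 else 1

/-- Partial derivative `∂_μ` of a function on `ℝ^{1+d}`. -/
def pder (d : ℕ) (μ : Fin (d + 1)) (F : (Fin (d + 1) → ℝ) → ℝ) (q : Fin (d + 1) → ℝ) : ℝ :=
  fderiv ℝ F q (Pi.single μ 1)

/-- The relativistic Euler equations with equation of state `peos` on the set `O`:
`u^μ ∂_μ ϱ + (p+ϱ) ∂_μ u^μ = 0` and `(p+ϱ) u^μ ∂_μ u_α + Π^μ_α ∂_μ p = 0`, where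
`Π^μ_α = δ^μ_α + u^μ u_α` and indices are lowered with `m = diag(−1,1,…,1)`. -/
def RelEuler (d : ℕ) (peos : ℝ → ℝ) (O : Set (Fin (d + 1) → ℝ))
    (ϱ : (Fin (d + 1) → ℝ) → ℝ) (u : (Fin (d + 1) → ℝ) → Fin (d + 1) → ℝ) : Prop :=
  ∀ q ∈ O,
    ((∑ μ, u q μ * pder d μ ϱ q)
      + (peos (ϱ q) + ϱ q) * ∑ μ, pder d μ (fun z => u z μ) q = 0) ∧
    ∀ α, (peos (ϱ q) + ϱ q) * (∑ μ, u q μ * pder d μ (fun z => mlt d α * u z α) q)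
        + pder d α (fun z => peos (ϱ z)) q
        + mlt d α * u q α * ∑ μ, u q μ * pder d μ (fun z => peos (ϱ z)) q = 0

/-- The lowered good velocity `v_α = f(ϱ) m_{αα} u^α` (no summation; `m` diagonal). -/
def vLow (d : ℕ) (f : ℝ → ℝ) (ϱ : (Fin (d + 1) → ℝ) → ℝ)
    (u : (Fin (d + 1) → ℝ) → Fin (d + 1) → ℝ) (α : Fin (d + 1))
    (z : Fin (d + 1) → ℝ) : ℝ :=
  f (ϱ z) * mlt d α * u z α

/-- The relativistic vorticity two-form `ω_{αβ} = ∂_α v_β − ∂_β v_α`. -/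
def vort (d : ℕ) (f : ℝ → ℝ) (ϱ : (Fin (d + 1) → ℝ) → ℝ)
    (u : (Fin (d + 1) → ℝ) → Fin (d + 1) → ℝ) (α β : Fin (d + 1))
    (q : Fin (d + 1) → ℝ) : ℝ :=
  pder d α (vLow d f ϱ u β) q - pder d β (vLow d f ϱ u α) q

section Aux

variable {d : ℕ}

lemma pder_congr {F G : (Fin (d + 1) → ℝ) → ℝ} {q : Fin (d + 1) → ℝ}
    (h : F =ᶠ[nhds q] G) (μ : Fin (d + 1)) : pder d μ F q = pder d μ G q := by
  unfold pder; rw [h.fderiv_eq]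

lemma pder_const (c : ℝ) (μ : Fin (d + 1)) (q : Fin (d + 1) → ℝ) :
    pder d μ (fun _ => c) q = 0 := by
  simp [pder]

lemma pder_zero_on {O : Set (Fin (d + 1) → ℝ)} (hO : IsOpen O)
    {F : (Fin (d + 1) → ℝ) → ℝ} {q : Fin (d + 1) → ℝ} (hq : q ∈ O)
    (h : ∀ z ∈ O, F z = 0) (μ : Fin (d + 1)) : pder d μ F q = 0 := by
  have he : F =ᶠ[nhds q] (fun _ => (0 : ℝ)) :=
    Filter.eventuallyEq_of_mem (hO.mem_nhds hq) h
  rw [pder_congr he μ, pder_const]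

lemma pder_mul {F G : (Fin (d + 1) → ℝ) → ℝ} {q : Fin (d + 1) → ℝ}
    (hF : DifferentiableAt ℝ F q) (hG : DifferentiableAt ℝ G q) (μ : Fin (d + 1)) :
    pder d μ (fun z => F z * G z) q = pder d μ F q * G q + F q * pder d μ G q := by
  unfold pder
  rw [fderiv_fun_mul hF hG]
  simp only [ContinuousLinearMap.add_apply, ContinuousLinearMap.smul_apply, smul_eq_mul]
  ring

lemma pder_const_mul {F : (Fin (d + 1) → ℝ) → ℝ} {q : Fin (d + 1) → ℝ}
    (hF : DifferentiableAt ℝ F q) (c : ℝ) (μ : Fin (d + 1)) :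
    pder d μ (fun z => c * F z) q = c * pder d μ F q := by
  unfold pder
  rw [fderiv_const_mul hF]
  simp

lemma pder_mul_const {F : (Fin (d + 1) → ℝ) → ℝ} {q : Fin (d + 1) → ℝ}
    (hF : DifferentiableAt ℝ F q) (c : ℝ) (μ : Fin (d + 1)) :
    pder d μ (fun z => F z * c) q = pder d μ F q * c := by
  unfold pder
  rw [fderiv_mul_const hF]
  simp [mul_comm]

lemma pder_sub {F G : (Fin (d + 1) → ℝ) → ℝ} {q : Fin (d + 1) → ℝ}
    (hF : DifferentiableAt ℝ F q) (hG : DifferentiableAt ℝ G q) (μ : Fin (d + 1)) :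
    pder d μ (fun z => F z - G z) q = pder d μ F q - pder d μ G q := by
  unfold pder
  rw [fderiv_fun_sub hF hG]
  simp

lemma pder_sum {ι : Type*} (s : Finset ι) {F : ι → (Fin (d + 1) → ℝ) → ℝ}
    {q : Fin (d + 1) → ℝ} (h : ∀ i ∈ s, DifferentiableAt ℝ (F i) q) (μ : Fin (d + 1)) :
    pder d μ (fun z => ∑ i ∈ s, F i z) q = ∑ i ∈ s, pder d μ (F i) q := by
  unfold pder
  rw [fderiv_fun_sum h]
  simp

lemma pder_comp {F : (Fin (d + 1) → ℝ) → ℝ} {g : ℝ → ℝ} {q : Fin (d + 1) → ℝ}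
    (hg : DifferentiableAt ℝ g (F q)) (hF : DifferentiableAt ℝ F q) (μ : Fin (d + 1)) :
    pder d μ (fun z => g (F z)) q = deriv g (F q) * pder d μ F q := by
  have h : HasFDerivAt (fun z => g (F z)) (deriv g (F q) • fderiv ℝ F q) q :=
    hg.hasDerivAt.comp_hasFDerivAt q hF.hasFDerivAt
  unfold pder
  rw [h.fderiv]
  simp

lemma contDiffAt_pder {F : (Fin (d + 1) → ℝ) → ℝ} {q : Fin (d + 1) → ℝ}
    (hF : ContDiffAt ℝ 2 F q) (μ : Fin (d + 1)) :
    ContDiffAt ℝ 1 (fun z => pder d μ F z) q := by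
  have h := hF.fderiv_right (m := 1) (by norm_num)
  exact h.clm_apply contDiffAt_const

lemma pder_pder_comm {F : (Fin (d + 1) → ℝ) → ℝ} {q : Fin (d + 1) → ℝ}
    (hF : ContDiffAt ℝ 2 F q) (α β : Fin (d + 1)) :
    pder d α (fun z => pder d β F z) q = pder d β (fun z => pder d α F z) q := by
  have hd1 : DifferentiableAt ℝ (fderiv ℝ F) q :=
    (hF.fderiv_right (m := 1) (by norm_num)).differentiableAt one_ne_zero
  have key : ∀ γ δ : Fin (d + 1), pder d γ (fun z => pder d δ F z) q
      = fderiv ℝ (fderiv ℝ F) q (Pi.single γ 1) (Pi.single δ 1) := by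
    intro γ δ
    have h2 : fderiv ℝ (fun z => fderiv ℝ F z (Pi.single δ 1)) q
        = ((fderiv ℝ F q).comp
            (fderiv ℝ (fun _ => (Pi.single δ 1 : Fin (d + 1) → ℝ)) q))
          + (fderiv ℝ (fderiv ℝ F) q).flip (Pi.single δ 1) :=
      fderiv_clm_apply hd1 (differentiableAt_const _)
    have h3 : pder d γ (fun z => pder d δ F z) q
        = fderiv ℝ (fun z => fderiv ℝ F z (Pi.single δ 1)) q (Pi.single γ 1) := rfl
    rw [h3, h2]
    simp
  rw [key α β, key β α]
  exact (hF.isSymmSndFDerivAt (by simp [minSmoothness_of_isRCLikeNormedField])).eq _ _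

end Aux

/-- **Transport equation for the relativistic vorticity** (equation (1.22)): for a `C²`
solution of the relativistic Euler equations,
`v^μ ∂_μ ω_{αβ} + ∂_α v^μ ω_{μβ} + ∂_β v^μ ω_{αμ} = 0`. -/
theorem relativistic_vorticity_transport
    (d : ℕ) (hd : 1 ≤ d) (peos f : ℝ → ℝ)
    (O : Set (Fin (d + 1) → ℝ)) (hO : IsOpen O)
    (ϱ : (Fin (d + 1) → ℝ) → ℝ) (u : (Fin (d + 1) → ℝ) → Fin (d + 1) → ℝ)
    (hp : ContDiffOn ℝ 2 peos (Ioi 0))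
    (hϱ : ContDiffOn ℝ 2 ϱ O) (hu : ContDiffOn ℝ 2 u O)
    (hϱpos : ∀ q ∈ O, 0 < ϱ q)
    (hpϱ : ∀ q ∈ O, 0 < peos (ϱ q) + ϱ q)
    (hu0 : ∀ q ∈ O, 0 < u q 0)
    (hnorm : ∀ q ∈ O, ∑ α, mlt d α * u q α * u q α = -1)
    (hf : ContDiffOn ℝ 2 f (Ioi 0)) (hfpos : ∀ y > (0 : ℝ), 0 < f y)
    (hfode : ∀ y > (0 : ℝ), deriv f y * (peos y + y) = deriv peos y * f y)
    (heuler : RelEuler d peos O ϱ u) :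
    ∀ q ∈ O, ∀ α β : Fin (d + 1),
      (∑ μ, f (ϱ q) * u q μ * pder d μ (vort d f ϱ u α β) q)
        + (∑ μ, pder d α (fun z => f (ϱ z) * u z μ) q * vort d f ϱ u μ β q)
        + (∑ μ, pder d β (fun z => f (ϱ z) * u z μ) q * vort d f ϱ u α μ q) = 0 := by
  classical
  -- pointwise smoothness facts
  have hϱ2 : ∀ z ∈ O, ContDiffAt ℝ 2 ϱ z := fun z hz => hϱ.contDiffAt (hO.mem_nhds hz)
  have hu2 : ∀ z ∈ O, ∀ μ, ContDiffAt ℝ 2 (fun w => u w μ) z := fun z hz μ =>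
    contDiffAt_pi.mp (hu.contDiffAt (hO.mem_nhds hz)) μ
  have hf2 : ∀ z ∈ O, ContDiffAt ℝ 2 f (ϱ z) := fun z hz =>
    hf.contDiffAt (isOpen_Ioi.mem_nhds (hϱpos z hz))
  have hp2 : ∀ z ∈ O, ContDiffAt ℝ 2 peos (ϱ z) := fun z hz =>
    hp.contDiffAt (isOpen_Ioi.mem_nhds (hϱpos z hz))
  have hfϱ2 : ∀ z ∈ O, ContDiffAt ℝ 2 (fun w => f (ϱ w)) z := fun z hz =>
    (hf2 z hz).comp z (hϱ2 z hz)
  have hfu2 : ∀ z ∈ O, ∀ μ, ContDiffAt ℝ 2 (fun w => f (ϱ w) * u w μ) z := fun z hz μ =>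
    (hfϱ2 z hz).mul (hu2 z hz μ)
  have hvLow2 : ∀ z ∈ O, ∀ ν, ContDiffAt ℝ 2 (vLow d f ϱ u ν) z := fun z hz ν =>
    ((hfϱ2 z hz).mul contDiffAt_const).mul (hu2 z hz ν)
  have hvortDiff : ∀ z ∈ O, ∀ μ ν, DifferentiableAt ℝ (vort d f ϱ u μ ν) z := by
    intro z hz μ ν
    have h1 := contDiffAt_pder (hvLow2 z hz ν) μ
    have h2 := contDiffAt_pder (hvLow2 z hz μ) ν
    exact (h1.sub h2).differentiableAt one_ne_zero
  -- derivative of vLow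
  have hvl : ∀ z ∈ O, ∀ μ ν, pder d μ (vLow d f ϱ u ν) z
      = mlt d ν * (deriv f (ϱ z) * pder d μ ϱ z * u z ν
          + f (ϱ z) * pder d μ (fun w => u w ν) z) := by
    intro z hz μ ν
    have hdϱ : DifferentiableAt ℝ ϱ z := (hϱ2 z hz).differentiableAt two_ne_zero
    have hdf : DifferentiableAt ℝ f (ϱ z) := (hf2 z hz).differentiableAt two_ne_zero
    have hdfϱ : DifferentiableAt ℝ (fun w => f (ϱ w)) z := hdf.comp z hdϱ
    have hdu : DifferentiableAt ℝ (fun w => u w ν) z :=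
      (hu2 z hz ν).differentiableAt two_ne_zero
    have h1 : pder d μ (vLow d f ϱ u ν) z
        = pder d μ (fun w => f (ϱ w) * mlt d ν) z * u z ν
          + (f (ϱ z) * mlt d ν) * pder d μ (fun w => u w ν) z :=
      pder_mul (hdfϱ.mul_const _) hdu μ
    have h2 : pder d μ (fun w => f (ϱ w) * mlt d ν) z
        = pder d μ (fun w => f (ϱ w)) z * mlt d ν := pder_mul_const hdfϱ _ μ
    have h3 : pder d μ (fun w => f (ϱ w)) z = deriv f (ϱ z) * pder d μ ϱ z :=
      pder_comp hdf hdϱ μ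
    rw [h1, h2, h3]; ring
  -- derivative of the normalization constraint
  have hnormd : ∀ z ∈ O, ∀ γ,
      (∑ μ, mlt d μ * u z μ * pder d γ (fun w => u w μ) z) = 0 := by
    intro z hz γ
    have hN0 : pder d γ (fun w => ∑ μ, mlt d μ * u w μ * u w μ) z = 0 := by
      have heq : (fun w => ∑ μ, mlt d μ * u w μ * u w μ) =ᶠ[nhds z]
          (fun _ => (-1 : ℝ)) :=
        Filter.eventuallyEq_of_mem (hO.mem_nhds hz) (fun w hw => hnorm w hw)
      rw [pder_congr heq γ, pder_const]
    have hdiff : ∀ μ : Fin (d + 1),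
        DifferentiableAt ℝ (fun w => mlt d μ * u w μ * u w μ) z := by
      intro μ
      have hdu : DifferentiableAt ℝ (fun w => u w μ) z :=
        (hu2 z hz μ).differentiableAt two_ne_zero
      exact (hdu.const_mul _).mul hdu
    have hsum : pder d γ (fun w => ∑ μ, mlt d μ * u w μ * u w μ) z
        = ∑ μ, pder d γ (fun w => mlt d μ * u w μ * u w μ) z :=
      pder_sum Finset.univ (fun μ _ => hdiff μ) γ
    have h1 : (∑ μ, pder d γ (fun w => mlt d μ * u w μ * u w μ) z) = 0 :=
      hsum.symm.trans hN0
    have hmul : ∀ μ : Fin (d + 1), pder d γ (fun w => mlt d μ * u w μ * u w μ) z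
        = 2 * (mlt d μ * u z μ * pder d γ (fun w => u w μ) z) := by
      intro μ
      have hdu : DifferentiableAt ℝ (fun w => u w μ) z :=
        (hu2 z hz μ).differentiableAt two_ne_zero
      have ha : pder d γ (fun w => mlt d μ * u w μ * u w μ) z
          = pder d γ (fun w => mlt d μ * u w μ) z * u z μ
            + (mlt d μ * u z μ) * pder d γ (fun w => u w μ) z :=
        pder_mul (hdu.const_mul _) hdu γ
      have hb : pder d γ (fun w => mlt d μ * u w μ) z
          = mlt d μ * pder d γ (fun w => u w μ) z := pder_const_mul hdu _ γ
      rw [ha, hb]; ring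
    simp only [hmul] at h1
    rw [← Finset.mul_sum] at h1
    linarith
  -- massaged momentum equation
  have hmom : ∀ z ∈ O, ∀ α : Fin (d + 1),
      (peos (ϱ z) + ϱ z)
          * (∑ μ, u z μ * (mlt d α * pder d μ (fun w => u w α) z))
        + deriv peos (ϱ z) * pder d α ϱ z
        + mlt d α * u z α * (deriv peos (ϱ z) * ∑ μ, u z μ * pder d μ ϱ z) = 0 := by
    intro z hz α
    have h := (heuler z hz).2 α
    have hdϱ : DifferentiableAt ℝ ϱ z := (hϱ2 z hz).differentiableAt two_ne_zero
    have hdp : DifferentiableAt ℝ peos (ϱ z) := (hp2 z hz).differentiableAt two_ne_zero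
    have hdu : DifferentiableAt ℝ (fun w => u w α) z :=
      (hu2 z hz α).differentiableAt two_ne_zero
    have e1 : ∀ μ : Fin (d + 1), pder d μ (fun w => mlt d α * u w α) z
        = mlt d α * pder d μ (fun w => u w α) z := fun μ => pder_const_mul hdu _ μ
    have e2 : ∀ μ : Fin (d + 1), pder d μ (fun w => peos (ϱ w)) z
        = deriv peos (ϱ z) * pder d μ ϱ z := fun μ => pder_comp hdp hdϱ μ
    simp only [e1, e2] at h
    have hfac : (∑ μ, u z μ * (deriv peos (ϱ z) * pder d μ ϱ z))
        = deriv peos (ϱ z) * ∑ μ, u z μ * pder d μ ϱ z := by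
      rw [Finset.mul_sum]
      exact Finset.sum_congr rfl fun μ _ => by ring
    rw [hfac] at h
    linarith [h]
  -- Step 1: the contraction v^μ ω_{μα} vanishes on O
  have step1 : ∀ z ∈ O, ∀ α : Fin (d + 1),
      (∑ μ, f (ϱ z) * u z μ * vort d f ϱ u μ α z) = 0 := by
    intro z hz α
    have hrw : ∀ μ : Fin (d + 1), f (ϱ z) * u z μ * vort d f ϱ u μ α z
        = (f (ϱ z) * deriv f (ϱ z) * mlt d α * u z α) * (u z μ * pder d μ ϱ z)
          + (f (ϱ z) * f (ϱ z))
              * (u z μ * (mlt d α * pder d μ (fun w => u w α) z))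
          + (-(f (ϱ z) * deriv f (ϱ z) * pder d α ϱ z))
              * (mlt d μ * u z μ * u z μ)
          + (-(f (ϱ z) * f (ϱ z)))
              * (mlt d μ * u z μ * pder d α (fun w => u w μ) z) := by
      intro μ
      have h1 := hvl z hz μ α
      have h2 := hvl z hz α μ
      simp only [vort, h1, h2]
      ring
    simp only [hrw]
    rw [Finset.sum_add_distrib, Finset.sum_add_distrib, Finset.sum_add_distrib,
      ← Finset.mul_sum, ← Finset.mul_sum, ← Finset.mul_sum, ← Finset.mul_sum,
      hnorm z hz, hnormd z hz α]
    have hmz := hmom z hz α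
    have hode := hfode (ϱ z) (hϱpos z hz)
    have hA : (peos (ϱ z) + ϱ z) ≠ 0 := (hpϱ z hz).ne'
    apply mul_left_cancel₀ hA
    rw [mul_zero]
    linear_combination (f (ϱ z) * f (ϱ z)) * hmz
      + ((mlt d α * u z α * (∑ μ, u z μ * pder d μ ϱ z) + pder d α ϱ z) * f (ϱ z)) * hode
  -- fix the point
  intro q hq α β
  -- Steps 2–3: differentiate the vanishing contraction
  have step23 : ∀ γ δ : Fin (d + 1),
      (∑ μ, pder d γ (fun z => f (ϱ z) * u z μ) q * vort d f ϱ u μ δ q)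
        + (∑ μ, f (ϱ q) * u q μ * pder d γ (vort d f ϱ u μ δ) q) = 0 := by
    intro γ δ
    have h0 : pder d γ (fun z => ∑ μ, f (ϱ z) * u z μ * vort d f ϱ u μ δ z) q = 0 :=
      pder_zero_on hO hq (fun z hz => step1 z hz δ) γ
    have hdiff : ∀ μ : Fin (d + 1),
        DifferentiableAt ℝ (fun z => f (ϱ z) * u z μ * vort d f ϱ u μ δ z) q :=
      fun μ => ((hfu2 q hq μ).differentiableAt two_ne_zero).mul (hvortDiff q hq μ δ)
    have hsum : pder d γ (fun z => ∑ μ, f (ϱ z) * u z μ * vort d f ϱ u μ δ z) q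
        = ∑ μ, pder d γ (fun z => f (ϱ z) * u z μ * vort d f ϱ u μ δ z) q :=
      pder_sum Finset.univ (fun μ _ => hdiff μ) γ
    have h1 : (∑ μ, pder d γ (fun z => f (ϱ z) * u z μ * vort d f ϱ u μ δ z) q) = 0 :=
      hsum.symm.trans h0
    have hmul : ∀ μ : Fin (d + 1),
        pder d γ (fun z => f (ϱ z) * u z μ * vort d f ϱ u μ δ z) q
          = pder d γ (fun z => f (ϱ z) * u z μ) q * vort d f ϱ u μ δ q
            + f (ϱ q) * u q μ * pder d γ (vort d f ϱ u μ δ) q :=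
      fun μ => pder_mul ((hfu2 q hq μ).differentiableAt two_ne_zero)
        (hvortDiff q hq μ δ) γ
    simp only [hmul] at h1
    rw [Finset.sum_add_distrib] at h1
    exact h1
  -- skew symmetry of the vorticity
  have hskew : ∀ γ δ : Fin (d + 1), vort d f ϱ u γ δ q = -vort d f ϱ u δ γ q := by
    intro γ δ
    simp only [vort]
    ring
  -- splitting of the vorticity derivatives, and Schwarz
  have hpd1 : ∀ γ δ : Fin (d + 1),
      ContDiffAt ℝ 1 (fun z => pder d γ (vLow d f ϱ u δ) z) q :=
    fun γ δ => contDiffAt_pder (hvLow2 q hq δ) γ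
  have hsub : ∀ γ δ ε : Fin (d + 1), pder d ε (vort d f ϱ u γ δ) q
      = pder d ε (fun z => pder d γ (vLow d f ϱ u δ) z) q
        - pder d ε (fun z => pder d δ (vLow d f ϱ u γ) z) q :=
    fun γ δ ε => pder_sub ((hpd1 γ δ).differentiableAt one_ne_zero)
      ((hpd1 δ γ).differentiableAt one_ne_zero) ε
  have hbr : ∀ μ : Fin (d + 1),
      pder d μ (vort d f ϱ u α β) q - pder d α (vort d f ϱ u μ β) q
        + pder d β (vort d f ϱ u μ α) q = 0 := by
    intro μ
    rw [hsub α β μ, hsub μ β α, hsub μ α β]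
    rw [pder_pder_comm (hvLow2 q hq β) μ α, pder_pder_comm (hvLow2 q hq α) μ β,
      pder_pder_comm (hvLow2 q hq μ) α β]
    ring
  have hbig : (∑ μ, f (ϱ q) * u q μ * pder d μ (vort d f ϱ u α β) q)
      = (∑ μ, f (ϱ q) * u q μ * pder d α (vort d f ϱ u μ β) q)
        - (∑ μ, f (ϱ q) * u q μ * pder d β (vort d f ϱ u μ α) q) := by
    rw [← Finset.sum_sub_distrib]
    exact Finset.sum_congr rfl fun μ _ => by
      linear_combination (f (ϱ q) * u q μ) * hbr μ
  have hflip : (∑ μ, pder d β (fun z => f (ϱ z) * u z μ) q * vort d f ϱ u α μ q)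
      = -∑ μ, pder d β (fun z => f (ϱ z) * u z μ) q * vort d f ϱ u μ α q := by
    rw [← Finset.sum_neg_distrib]
    exact Finset.sum_congr rfl fun μ _ => by rw [hskew α μ]; ring
  rw [hbig, hflip]
  linarith [step23 α β, step23 β α]
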